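/- Upper Bound on Price of Frugality for Submodular Instances: Let (A, f, c) be a multi-agent contract instance with n ≥ 1 agents and monotone submodular f, let 0 < b < B, let φ : 2^A → [0,1] be a subadditive set function, and suppose p({i}) ≤ b for every agent i ∈ A. Then Max-φ(B) ≤ min(⌈2B/b⌉ − 1, n) · Max-φ(b). -/

import Mathlib

open scoped BigOperators ENNReal
open Finset

/-- Marginal contribution of agent `i` to set `S`: `f_S(i) = f(S) - f(S \ {i})`. -/
noncomputable def marginal {α : Type*} [DecidableEq α] (f : Finset α → ℝ) (S : Finset α)
    (i : α) : ℝ :=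
  f S - f (S.erase i)

/-- Payment needed to incentivize `S`, valued in `[0,∞]`, with the conventions
`0/0 = 0` and `x/0 = ∞` for `x > 0` (these hold for ENNReal division). -/
noncomputable def payment {α : Type*} [DecidableEq α] (f : Finset α → ℝ) (c : α → ℝ)
    (S : Finset α) : ℝ≥0∞ :=
  ∑ i ∈ S, ENNReal.ofReal (c i) / ENNReal.ofReal (marginal f S i)

/-- The principal's profit from incentivizing `S`: `g(S) = (1 - p(S)) · f(S)`. -/
noncomputable def profit {α : Type*} [DecidableEq α] (f : Finset α → ℝ) (c : α → ℝ)
    (S : Finset α) : ℝ :=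
  (1 - (payment f c S).toReal) * f S

/-- `f` is monotone. -/
def IsMonotoneFn {α : Type*} (f : Finset α → ℝ) : Prop :=
  ∀ ⦃S T : Finset α⦄, S ⊆ T → f S ≤ f T

/-- `f` is subadditive. -/
def IsSubadditive {α : Type*} [DecidableEq α] (f : Finset α → ℝ) : Prop :=
  ∀ S T : Finset α, f (S ∪ T) ≤ f S + f T

/-- `f` is submodular (decreasing marginal values). -/
def IsSubmodular {α : Type*} [DecidableEq α] (f : Finset α → ℝ) : Prop :=
  ∀ ⦃S T : Finset α⦄, S ⊆ T → ∀ i ∉ T, f (insert i T) - f T ≤ f (insert i S) - f S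

/-- `f` is additive. -/
def IsAdditive {α : Type*} [DecidableEq α] (f : Finset α → ℝ) : Prop :=
  ∀ S : Finset α, f S = ∑ i ∈ S, f {i}

/-- `f` is XOS: a finite max of nonnegative additive functions. -/
def IsXOS {α : Type*} (f : Finset α → ℝ) : Prop :=
  ∃ (k : ℕ) (a : Fin (k + 1) → α → ℝ),
    (∀ j i, 0 ≤ a j i) ∧
    ∀ S : Finset α, f S = Finset.univ.sup' Finset.univ_nonempty (fun j => ∑ i ∈ S, a j i)

/-- Agent `i` is light: it can be incentivized with payment at most `1/2`. -/
def isLight {α : Type*} [DecidableEq α] (f : Finset α → ℝ) (c : α → ℝ) (i : α) : Prop :=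
  payment f c {i} ≤ ENNReal.ofReal (1 / 2)

/-- `S` is budget-feasible for budget `B`. -/
def feasible {α : Type*} [DecidableEq α] (f : Finset α → ℝ) (c : α → ℝ) (B : ℝ)
    (S : Finset α) : Prop :=
  payment f c S ≤ ENNReal.ofReal B

/-- `S` is a budget-feasible set of light agents. -/
def feasibleLight {α : Type*} [DecidableEq α] (f : Finset α → ℝ) (c : α → ℝ) (B : ℝ)
    (S : Finset α) : Prop :=
  (∀ i ∈ S, isLight f c i) ∧ payment f c S ≤ ENNReal.ofReal B

/-- The maximum (supremum) value of objective `φ` over sets satisfying `P`. -/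
noncomputable def maxVal {α : Type*} (φ : Finset α → ℝ) (P : Finset α → Prop) : ℝ :=
  sSup (φ '' {S | P S})

/-- `φ` is a BEST objective for the instance `(f, c)`: it is nonnegative, sandwiched between
profit and reward, and satisfies `φ(S) ≤ f(S \ {i}) + φ({i})` for `i ∈ S`. -/
def IsBEST {α : Type*} [DecidableEq α] (f : Finset α → ℝ) (c : α → ℝ)
    (φ : Finset α → ℝ) : Prop :=
  (∀ S, 0 ≤ φ S) ∧
  (∀ S, φ S ≤ f S) ∧
  (∀ S, payment f c S ≤ 1 → (1 - (payment f c S).toReal) * f S ≤ φ S) ∧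
  (∀ S, ∀ i ∈ S, φ S ≤ f (S.erase i) + φ {i})

/-- `φ` is a BEST objective for the instance `(f, c)` restricted to sets satisfying `P`. -/
def IsBESTOn {α : Type*} [DecidableEq α] (f : Finset α → ℝ) (c : α → ℝ)
    (P : Finset α → Prop) (φ : Finset α → ℝ) : Prop :=
  (∀ S, P S → 0 ≤ φ S) ∧
  (∀ S, P S → φ S ≤ f S) ∧
  (∀ S, P S → payment f c S ≤ 1 → (1 - (payment f c S).toReal) * f S ≤ φ S) ∧
  (∀ S, P S → ∀ i ∈ S, φ S ≤ f (S.erase i) + φ {i})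



section AuxPoF
variable {α : Type*} [DecidableEq α]

/-- From a set whose total weight exceeds `b/2`, with all weights in `[0,b]`, one can
extract a subset with total weight in `(b/2, b]`. -/
lemma pof_extract_chunk {b : ℝ} (hb : 0 < b) :
    ∀ S : Finset α, ∀ q : α → ℝ, (∀ i ∈ S, 0 ≤ q i ∧ q i ≤ b) →
      b / 2 < ∑ i ∈ S, q i →
      ∃ T, T ⊆ S ∧ b / 2 < ∑ i ∈ T, q i ∧ ∑ i ∈ T, q i ≤ b := by
  intro S
  induction S using Finset.induction_on with
  | empty => intro q _ hS; simp only [Finset.sum_empty] at hS; linarith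
  | @insert a s ha ih =>
    intro q hq hS
    have hqa := hq a (Finset.mem_insert_self a s)
    by_cases h1 : b / 2 < q a
    · exact ⟨{a}, by simp [Finset.singleton_subset_iff], by simpa using h1,
        by simpa using hqa.2⟩
    · push_neg at h1
      by_cases h2 : b / 2 < ∑ i ∈ s, q i
      · obtain ⟨T, hT1, hT2, hT3⟩ := ih q (fun i hi => hq i (Finset.mem_insert_of_mem hi)) h2
        exact ⟨T, hT1.trans (Finset.subset_insert a s), hT2, hT3⟩
      · push_neg at h2
        refine ⟨insert a s, le_refl _, hS, ?_⟩
        rw [Finset.sum_insert ha]; linarith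

/-- Partition (cover) a set with small weights into few parts of weight at most `b`. -/
lemma pof_partition {b : ℝ} (hb : 0 < b) :
    ∀ (k : ℕ) (S : Finset α) (q : α → ℝ), (∀ i ∈ S, 0 ≤ q i ∧ q i ≤ b) →
      (∑ i ∈ S, q i) ≤ ((k : ℝ) + 2) * (b / 2) →
      ∃ L : List (Finset α), L ≠ [] ∧ L.length ≤ k + 1 ∧
        (∀ T ∈ L, T ⊆ S ∧ ∑ i ∈ T, q i ≤ b) ∧ (∀ i ∈ S, ∃ T ∈ L, i ∈ T) := by
  intro k
  induction k with
  | zero =>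
    intro S q hq hsum
    refine ⟨[S], by simp, by simp, ?_, fun i hi => ⟨S, by simp, hi⟩⟩
    intro T hT
    simp only [List.mem_singleton] at hT
    subst hT
    exact ⟨le_refl _, by linarith⟩
  | succ k ih =>
    intro S q hq hsum
    by_cases hSb : ∑ i ∈ S, q i ≤ b
    · exact ⟨[S], by simp, by simp, by
        intro T hT; simp only [List.mem_singleton] at hT; subst hT
        exact ⟨le_refl _, hSb⟩, fun i hi => ⟨S, by simp, hi⟩⟩
    · push_neg at hSb
      have hhalf : b / 2 < ∑ i ∈ S, q i := by linarith
      obtain ⟨T, hTS, hT1, hT2⟩ := pof_extract_chunk hb S q hq hhalf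
      have hsub : ∑ i ∈ S \ T, q i = ∑ i ∈ S, q i - ∑ i ∈ T, q i :=
        Finset.sum_sdiff_eq_sub hTS
      have hrec : ∑ i ∈ S \ T, q i ≤ ((k : ℝ) + 2) * (b / 2) := by
        rw [hsub]; push_cast at hsum ⊢; linarith
      obtain ⟨L, hne, hlen, hparts, hcov⟩ := ih (S \ T) q
        (fun i hi => hq i (Finset.sdiff_subset hi)) hrec
      refine ⟨T :: L, by simp, by simpa using Nat.succ_le_succ hlen, ?_, ?_⟩
      · intro U hU
        rcases List.mem_cons.mp hU with rfl | hU
        · exact ⟨hTS, hT2⟩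
        · exact ⟨(hparts U hU).1.trans Finset.sdiff_subset, (hparts U hU).2⟩
      · intro i hi
        by_cases hiT : i ∈ T
        · exact ⟨T, List.mem_cons_self, hiT⟩
        · obtain ⟨U, hU1, hU2⟩ := hcov i (Finset.mem_sdiff.mpr ⟨hi, hiT⟩)
          exact ⟨U, List.mem_cons_of_mem T hU1, hU2⟩

lemma pof_foldr_subset (S : Finset α) :
    ∀ L : List (Finset α), (∀ T ∈ L, T ⊆ S) → L.foldr (· ∪ ·) ∅ ⊆ S := by
  intro L
  induction L with
  | nil => intro _; simp
  | cons T L ih =>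
    intro h
    simp only [List.foldr_cons]
    exact Finset.union_subset (h T List.mem_cons_self)
      (ih fun U hU => h U (List.mem_cons_of_mem T hU))

lemma pof_mem_foldr {i : α} :
    ∀ L : List (Finset α), ∀ T ∈ L, i ∈ T → i ∈ L.foldr (· ∪ ·) ∅ := by
  intro L
  induction L with
  | nil => simp
  | cons U L ih =>
    intro T hT hi
    simp only [List.foldr_cons, Finset.mem_union]
    rcases List.mem_cons.mp hT with rfl | hT
    · exact Or.inl hi
    · exact Or.inr (ih T hT hi)

lemma pof_subadd_foldr {ψ : Finset α → ℝ} (hψ : IsSubadditive ψ) :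
    ∀ (L : List (Finset α)) (T : Finset α),
      ψ ((T :: L).foldr (· ∪ ·) ∅) ≤ ((T :: L).map ψ).sum := by
  intro L
  induction L with
  | nil => intro T; simp
  | cons U L ih =>
    intro T
    have h1 : ψ (T ∪ (U :: L).foldr (· ∪ ·) ∅) ≤ ψ T + ψ ((U :: L).foldr (· ∪ ·) ∅) :=
      hψ T _
    have h2 := ih U
    simp only [List.foldr_cons, List.map_cons, List.sum_cons] at h1 h2 ⊢
    linarith

lemma pof_cover_bound {ψ : Finset α → ℝ} (hψ : IsSubadditive ψ) (S : Finset α)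
    (L : List (Finset α)) (hne : L ≠ [])
    (hsub : ∀ T ∈ L, T ⊆ S) (hcov : ∀ i ∈ S, ∃ T ∈ L, i ∈ T) :
    ψ S ≤ (L.map ψ).sum := by
  have hU : L.foldr (· ∪ ·) ∅ = S := by
    apply Finset.Subset.antisymm (pof_foldr_subset S L hsub)
    intro i hi
    obtain ⟨T, hT, hiT⟩ := hcov i hi
    exact pof_mem_foldr L T hT hiT
  obtain ⟨T, L', rfl⟩ := List.exists_cons_of_ne_nil hne
  calc ψ S = ψ ((T :: L').foldr (· ∪ ·) ∅) := by rw [hU]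
    _ ≤ ((T :: L').map ψ).sum := pof_subadd_foldr hψ L' T

/-- Payments inside a subset are bounded by the per-agent payments computed w.r.t.
the larger set (submodularity). -/
lemma pof_payment_subset_le (f : Finset α → ℝ) (c : α → ℝ) (hsubmod : IsSubmodular f)
    {S T : Finset α} (hTS : T ⊆ S) :
    payment f c T ≤ ∑ i ∈ T, ENNReal.ofReal (c i) / ENNReal.ofReal (marginal f S i) := by
  unfold payment
  refine Finset.sum_le_sum fun i hi => ?_
  have hi' : i ∈ S := hTS hi
  have key : marginal f S i ≤ marginal f T i := by
    have h := hsubmod (Finset.erase_subset_erase i hTS) i (Finset.notMem_erase i S)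
    rw [Finset.insert_erase hi', Finset.insert_erase hi] at h
    unfold marginal
    linarith
  exact ENNReal.div_le_div_left (ENNReal.ofReal_le_ofReal key) _

end AuxPoF
/-- **Upper Bound on Price of Frugality for Submodular Instances.** -/
theorem pof_upper_submodular {α : Type*} [DecidableEq α] [Fintype α] [Nonempty α]
    (f : Finset α → ℝ) (c : α → ℝ) (ψ : Finset α → ℝ)
    (hf01 : ∀ S, f S ∈ Set.Icc (0 : ℝ) 1) (hf0 : f ∅ = 0)
    (hmono : IsMonotoneFn f) (hsubmod : IsSubmodular f) (hc : ∀ i, 0 ≤ c i)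
    (hψ01 : ∀ S, ψ S ∈ Set.Icc (0 : ℝ) 1) (hψ : IsSubadditive ψ)
    (b B : ℝ) (hb : 0 < b) (hbB : b < B)
    (hsing : ∀ i, payment f c {i} ≤ ENNReal.ofReal b) :
    maxVal ψ (feasible f c B) ≤
      ((min (⌈2 * B / b⌉ - 1) (Fintype.card α : ℤ) : ℤ) : ℝ) * maxVal ψ (feasible f c b) := by
  classical
  set n := Fintype.card α with hn
  set K : ℤ := ⌈2 * B / b⌉ - 1 with hKdef
  have hK2 : (2 : ℤ) ≤ K := by
    have h2 : (2 : ℤ) < ⌈2 * B / b⌉ := by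
      rw [Int.lt_ceil]
      push_cast
      rw [lt_div_iff₀ hb]
      linarith
    omega
  have hn1 : 1 ≤ n := Fintype.card_pos
  have hempty : ∀ β : ℝ, feasible f c β ∅ := by
    intro β; simp [feasible, payment]
  have hbdd : BddAbove (ψ '' {S | feasible f c b S}) := by
    refine ⟨1, ?_⟩; rintro x ⟨S, _, rfl⟩; exact (hψ01 S).2
  have hmaxb_mem : ∀ T, feasible f c b T → ψ T ≤ maxVal ψ (feasible f c b) := by
    intro T hT
    exact le_csSup hbdd ⟨T, hT, rfl⟩
  have hmaxb0 : 0 ≤ maxVal ψ (feasible f c b) :=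
    le_trans (hψ01 ∅).1 (hmaxb_mem ∅ (hempty b))
  set M := maxVal ψ (feasible f c b) with hM
  -- the key claim
  have key : ∀ S : Finset α, feasible f c B S → ψ S ≤ ((min K (n : ℤ) : ℤ) : ℝ) * M := by
    intro S hSfeas
    set q' : α → ℝ≥0∞ := fun i => ENNReal.ofReal (c i) / ENNReal.ofReal (marginal f S i)
      with hq'def
    have hSf : ∑ i ∈ S, q' i ≤ ENNReal.ofReal B := hSfeas
    have hsumlt : ∑ i ∈ S, q' i < ⊤ :=
      lt_of_le_of_lt hSf ENNReal.ofReal_lt_top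
    have hfin : ∀ i ∈ S, q' i ≠ ⊤ := fun i hi => (ENNReal.sum_lt_top.mp hsumlt i hi).ne
    set q : α → ℝ := fun i => (q' i).toReal with hqdef
    have hqpos : ∀ i, 0 ≤ q i := fun i => ENNReal.toReal_nonneg
    have hsum_q : ∑ i ∈ S, q i ≤ B := by
      have h1 : (∑ i ∈ S, q' i).toReal = ∑ i ∈ S, q i := ENNReal.toReal_sum hfin
      have h2 : (∑ i ∈ S, q' i).toReal ≤ B :=
        ENNReal.toReal_le_of_le_ofReal (by linarith) hSf
      linarith [h1 ▸ h2]
    have hfeas_sub : ∀ T, T ⊆ S → ∑ i ∈ T, q i ≤ b → feasible f c b T := by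
      intro T hTS hTb
      have h1 : payment f c T ≤ ∑ i ∈ T, q' i := pof_payment_subset_le f c hsubmod hTS
      have h2 : ∑ i ∈ T, q' i = ENNReal.ofReal (∑ i ∈ T, q i) := by
        rw [ENNReal.ofReal_sum_of_nonneg (fun i _ => hqpos i)]
        refine Finset.sum_congr rfl fun i hi => ?_
        rw [ENNReal.ofReal_toReal (hfin i (hTS hi))]
      refine le_trans h1 ?_
      rw [h2]
      exact ENNReal.ofReal_le_ofReal hTb
    have hfeas_single : ∀ i : α, feasible f c b {i} := fun i => hsing i
    rcases le_or_gt (n : ℤ) K with hcase | hcase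
    · -- coefficient is n; cover by singletons
      rw [min_eq_right hcase]
      by_cases hSe : S = ∅
      · subst hSe
        have h1 : ψ (∅ : Finset α) ≤ M := hmaxb_mem ∅ (hempty b)
        have h2 : (1 : ℝ) ≤ (n : ℝ) := by exact_mod_cast hn1
        push_cast
        nlinarith
      · set L : List (Finset α) := S.toList.map (fun i => ({i} : Finset α)) with hLdef
        have hneL : L ≠ [] := by
          simp only [hLdef, ne_eq, List.map_eq_nil_iff, Finset.toList_eq_nil]
          exact hSe
        have hcb : ψ S ≤ (L.map ψ).sum := by
          refine pof_cover_bound hψ S L hneL ?_ ?_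
          · intro T hT
            simp only [hLdef, List.mem_map] at hT
            obtain ⟨i, hi, rfl⟩ := hT
            simpa using Finset.mem_toList.mp hi
          · intro i hi
            exact ⟨{i}, List.mem_map.mpr ⟨i, Finset.mem_toList.mpr hi, rfl⟩,
              Finset.mem_singleton_self i⟩
        have hsumle : (L.map ψ).sum ≤ (L.map ψ).length • M := by
          refine List.sum_le_card_nsmul _ _ fun x hx => ?_
          simp only [List.mem_map, hLdef] at hx
          obtain ⟨T, ⟨i, hi, rfl⟩, rfl⟩ := hx
          exact hmaxb_mem {i} (hfeas_single i)
        have hlen : (L.map ψ).length = S.card := by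
          simp [hLdef]
        have hcard : (S.card : ℝ) ≤ (n : ℝ) := by
          exact_mod_cast Finset.card_le_univ S
        rw [hlen] at hsumle
        rw [nsmul_eq_mul] at hsumle
        calc ψ S ≤ (S.card : ℝ) * M := le_trans hcb hsumle
          _ ≤ (n : ℝ) * M := mul_le_mul_of_nonneg_right hcard hmaxb0
          _ = ((n : ℤ) : ℝ) * M := by push_cast; ring
    · -- coefficient is K; heavy/light decomposition
      rw [min_eq_left hcase.le]
      set Kn : ℕ := K.toNat with hKn
      have hKcast : (Kn : ℤ) = K := Int.toNat_of_nonneg (by omega)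
      have hKn2 : 2 ≤ Kn := by omega
      set H : Finset α := S.filter (fun i => b < q i) with hH
      set Ls : Finset α := S.filter (fun i => ¬ b < q i) with hLs
      set h : ℕ := H.card with hh
      have hHS : H ⊆ S := Finset.filter_subset _ _
      have hLsS : Ls ⊆ S := Finset.filter_subset _ _
      have hHsum : (h : ℝ) * b ≤ ∑ i ∈ H, q i := by
        have := Finset.card_nsmul_le_sum H q b
          (fun i hi => (le_of_lt (Finset.mem_filter.mp hi).2))
        rwa [nsmul_eq_mul] at this
      have hsplit : ∑ i ∈ H, q i + ∑ i ∈ Ls, q i = ∑ i ∈ S, q i :=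
        Finset.sum_filter_add_sum_filter_not S _ q
      have hLsnn : 0 ≤ ∑ i ∈ Ls, q i := Finset.sum_nonneg fun i _ => hqpos i
      have hBle : B ≤ ((Kn : ℝ) + 1) * (b / 2) := by
        have hceil : 2 * B / b ≤ (⌈2 * B / b⌉ : ℝ) := Int.le_ceil _
        have hcast : (⌈2 * B / b⌉ : ℝ) = (Kn : ℝ) + 1 := by
          have : (⌈2 * B / b⌉ : ℤ) = (Kn : ℤ) + 1 := by omega
          exact_mod_cast congrArg (fun z : ℤ => (z : ℝ)) this
        rw [hcast] at hceil
        rw [div_le_iff₀ hb] at hceil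
        linarith
      have hhK : h + 1 ≤ Kn := by
        by_contra hcon
        push_neg at hcon
        have hKh : (Kn : ℝ) ≤ (h : ℝ) := by exact_mod_cast (by omega : Kn ≤ h)
        have c1 : (h : ℝ) * b ≤ B := by
          have := hHsum
          have h2 : ∑ i ∈ H, q i ≤ ∑ i ∈ S, q i := by linarith
          linarith
        have c2 : ((h : ℝ)) * b ≤ ((h : ℝ) + 1) * (b / 2) := by nlinarith
        have c3 : (h : ℝ) ≤ 1 := by nlinarith
        have c4 : (2 : ℝ) ≤ (Kn : ℝ) := by exact_mod_cast hKn2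
        linarith
      set m : ℕ := Kn - h with hm
      have hmadd : h + m = Kn := by omega
      have hm1 : 1 ≤ m := by omega
      obtain ⟨k, hk⟩ : ∃ k, m = k + 1 := ⟨m - 1, by omega⟩
      have hmr : (h : ℝ) + (m : ℝ) = (Kn : ℝ) := by exact_mod_cast hmadd
      have hkr : (m : ℝ) = (k : ℝ) + 1 := by exact_mod_cast hk
      have hLsle : ∑ i ∈ Ls, q i ≤ ((k : ℝ) + 2) * (b / 2) := by
        have h1 : ∑ i ∈ Ls, q i = ∑ i ∈ S, q i - ∑ i ∈ H, q i := by linarith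
        have hhb : 0 ≤ (h : ℝ) * b := mul_nonneg (Nat.cast_nonneg h) hb.le
        nlinarith [hqpos]
      obtain ⟨Ll, hLlne, hLllen, hLlparts, hLlcov⟩ := pof_partition hb k Ls q
        (fun i hi => ⟨hqpos i, not_lt.mp (Finset.mem_filter.mp hi).2⟩) hLsle
      set Lfull : List (Finset α) := (H.toList.map (fun i => ({i} : Finset α))) ++ Ll
        with hLfull
      have hneF : Lfull ≠ [] := by
        have h0 : 0 < Ll.length := List.length_pos_iff.mpr hLlne
        have h1 : 0 < Lfull.length := by
          simp only [hLfull, List.length_append]; omega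
        exact List.ne_nil_of_length_pos h1
      have hcb : ψ S ≤ (Lfull.map ψ).sum := by
        refine pof_cover_bound hψ S Lfull hneF ?_ ?_
        · intro T hT
          rcases List.mem_append.mp hT with hT | hT
          · simp only [List.mem_map] at hT
            obtain ⟨i, hi, rfl⟩ := hT
            have : i ∈ S := hHS (Finset.mem_toList.mp hi)
            simpa using this
          · exact (hLlparts T hT).1.trans hLsS
        · intro i hi
          by_cases hib : b < q i
          · refine ⟨{i}, List.mem_append.mpr (Or.inl ?_), Finset.mem_singleton_self i⟩
            exact List.mem_map.mpr ⟨i, Finset.mem_toList.mpr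
              (Finset.mem_filter.mpr ⟨hi, hib⟩), rfl⟩
          · obtain ⟨T, hT1, hT2⟩ := hLlcov i (Finset.mem_filter.mpr ⟨hi, hib⟩)
            exact ⟨T, List.mem_append.mpr (Or.inr hT1), hT2⟩
      have hsumle : (Lfull.map ψ).sum ≤ (Lfull.map ψ).length • M := by
        refine List.sum_le_card_nsmul _ _ fun x hx => ?_
        simp only [List.mem_map] at hx
        obtain ⟨T, hT, rfl⟩ := hx
        rcases List.mem_append.mp hT with hT | hT
        · simp only [List.mem_map] at hT
          obtain ⟨i, hi, rfl⟩ := hT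
          exact hmaxb_mem {i} (hfeas_single i)
        · exact hmaxb_mem T (hfeas_sub T ((hLlparts T hT).1.trans hLsS) (hLlparts T hT).2)
      have hlenF : (Lfull.map ψ).length ≤ Kn := by
        simp only [List.length_map, hLfull, List.length_append, List.length_map,
          Finset.length_toList]
        have : Ll.length ≤ k + 1 := hLllen
        omega
      have hfinal : ((Lfull.map ψ).length : ℝ) * M ≤ (Kn : ℝ) * M := by
        refine mul_le_mul_of_nonneg_right ?_ hmaxb0
        exact_mod_cast hlenF
      rw [nsmul_eq_mul] at hsumle
      have hKreal : ((K : ℤ) : ℝ) = (Kn : ℝ) := by exact_mod_cast hKcast.symm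
      rw [hKreal]
      linarith
  have hRHS0 : 0 ≤ ((min K (n : ℤ) : ℤ) : ℝ) * M := by
    refine mul_nonneg ?_ hmaxb0
    exact_mod_cast (by omega : (0 : ℤ) ≤ min K (n : ℤ))
  rw [maxVal]
  refine Real.sSup_le ?_ hRHS0
  rintro x ⟨S, hS, rfl⟩
  exact key S hS
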